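/- Suppose a family of functions u^ε : [0,T] × ℝ^{2n} → ℝ (indexed by ε ∈ (0,1)) satisfies the uniform bound |u^ε(t,x̃,x̄)| ≤ C and the uniform modulus estimate |u^ε(t,x̃,x̄) − u^ε(s,x̃',x̄')| ≤ C((1+|x̃|+|x̄|)√|t−s| + |x̃−x̃'| + √ε |x̄−x̄'|) for all t,s ∈ [0,T] and (x̃,x̄),(x̃',x̄') ∈ ℝⁿ×ℝⁿ, where C is independent of ε. Then there exist a sequence ε_m ↓ 0 and a bounded continuous function ũ* : [0,T] × ℝⁿ → ℝ such that u^{ε_m}(t,x̃,x̄) → ũ*(t,x̃) for every (t,x̃,x̄), with uniform convergence on compact subsets of [0,T] × ℝ^{2n}; moreover ũ* satisfies |ũ*(t,x̃) − ũ*(s,x̃')| ≤ C((1+|x̃|)√|t−s| + |x̃−x̃'|). -/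

import Mathlib

open Filter Set

lemma aux_small (C A ρ : ℝ) (hC : 0 < C) (hA : 0 ≤ A) (hρ : 0 < ρ) :
    ∃ δ > 0, ∀ d₁ d₂ : ℝ, 0 ≤ d₁ → d₁ ≤ δ → 0 ≤ d₂ → d₂ ≤ δ →
      C * ((1 + A) * Real.sqrt d₁ + 2 * d₂) < ρ := by
  have hA1 : (0:ℝ) < 1 + A := by linarith
  refine ⟨min ((ρ / (4 * C * (1 + A)))^2) (ρ / (8 * C)), lt_min (by positivity) (by positivity),
    fun d₁ d₂ h1 h1' h2 h2' => ?_⟩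
  have hs : Real.sqrt d₁ ≤ ρ / (4 * C * (1 + A)) := by
    have := Real.sqrt_le_sqrt (h1'.trans (min_le_left _ _))
    rwa [Real.sqrt_sq (by positivity)] at this
  have hd2 : d₂ ≤ ρ / (8 * C) := h2'.trans (min_le_right _ _)
  have k1 : C * (1 + A) * Real.sqrt d₁ ≤ C * (1 + A) * (ρ / (4 * C * (1 + A))) :=
    mul_le_mul_of_nonneg_left hs (by positivity)
  have k1' : C * (1 + A) * (ρ / (4 * C * (1 + A))) = ρ / 4 := by
    field_simp
  have k2 : 2 * C * d₂ ≤ 2 * C * (ρ / (8 * C)) := mul_le_mul_of_nonneg_left hd2 (by positivity)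
  have k2' : 2 * C * (ρ / (8 * C)) = ρ / 4 := by field_simp; ring
  nlinarith [Real.sqrt_nonneg d₁]

/-- Arzelà–Ascoli extraction for the family `u^ε`: a subsequence converges, locally
uniformly, to a bounded continuous limit independent of the fast variable `x̄`. -/
theorem stmt_4 (n : ℕ) (T C : ℝ) (hT : 0 < T) (hC : 0 < C)
    (u : ℝ → ℝ → EuclideanSpace ℝ (Fin n) → EuclideanSpace ℝ (Fin n) → ℝ)
    (hbdd : ∀ ε ∈ Ioo (0:ℝ) 1, ∀ t ∈ Icc 0 T, ∀ xt xb, |u ε t xt xb| ≤ C)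
    (hmod : ∀ ε ∈ Ioo (0:ℝ) 1, ∀ t ∈ Icc 0 T, ∀ s ∈ Icc 0 T, ∀ xt xb xt' xb',
      |u ε t xt xb - u ε s xt' xb'| ≤
        C * ((1 + ‖xt‖ + ‖xb‖) * Real.sqrt |t - s| + ‖xt - xt'‖ +
          Real.sqrt ε * ‖xb - xb'‖)) :
    ∃ (εm : ℕ → ℝ) (ustar : ℝ → EuclideanSpace ℝ (Fin n) → ℝ),
      (∀ m, εm m ∈ Ioo (0:ℝ) 1) ∧ StrictAnti εm ∧ Tendsto εm atTop (nhds 0) ∧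
      (∀ t ∈ Icc 0 T, ∀ xt, |ustar t xt| ≤ C) ∧
      ContinuousOn (fun q : ℝ × EuclideanSpace ℝ (Fin n) => ustar q.1 q.2)
        (Icc 0 T ×ˢ univ) ∧
      (∀ t ∈ Icc 0 T, ∀ s ∈ Icc 0 T, ∀ xt xt',
        |ustar t xt - ustar s xt'| ≤
          C * ((1 + ‖xt‖) * Real.sqrt |t - s| + ‖xt - xt'‖)) ∧
      (∀ t ∈ Icc 0 T, ∀ xt xb,
        Tendsto (fun m => u (εm m) t xt xb) atTop (nhds (ustar t xt))) ∧
      (∀ K : Set (ℝ × EuclideanSpace ℝ (Fin n) × EuclideanSpace ℝ (Fin n)),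
        IsCompact K → K ⊆ Icc 0 T ×ˢ (univ : Set _) →
        TendstoUniformlyOn (fun m q => u (εm m) q.1 q.2.1 q.2.2)
          (fun q => ustar q.1 q.2.1) atTop K) := by
  classical
  set S : Set (ℝ × EuclideanSpace ℝ (Fin n)) := Icc 0 T ×ˢ univ with hS
  haveI : Nonempty ↥S := ⟨⟨((0:ℝ), (0:EuclideanSpace ℝ (Fin n))), ⟨⟨le_refl 0, hT.le⟩, mem_univ _⟩⟩⟩
  -- countable dense sequence in S
  set e : ℕ → ℝ × EuclideanSpace ℝ (Fin n) := fun i => (TopologicalSpace.denseSeq ↥S i : ℝ × EuclideanSpace ℝ (Fin n)) with he_def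
  have he : ∀ i, e i ∈ S := fun i => (TopologicalSpace.denseSeq ↥S i).2
  have hdense : ∀ q ∈ S, ∀ ρ > (0:ℝ), ∃ i, dist q (e i) < ρ := by
    intro q hq ρ hρ
    have h1 : (⟨q, hq⟩ : ↥S) ∈ closure (range (TopologicalSpace.denseSeq ↥S)) :=
      (TopologicalSpace.denseRange_denseSeq ↥S) _
    rw [Metric.mem_closure_iff] at h1
    obtain ⟨b, hb, hbd⟩ := h1 ρ hρ
    obtain ⟨i, rfl⟩ := hb
    exact ⟨i, by rwa [Subtype.dist_eq] at hbd⟩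
  -- the base sequence of ε's
  set δseq : ℕ → ℝ := fun k => 1 / ((k : ℝ) + 2) with hδ_def
  have hδmem : ∀ k, δseq k ∈ Ioo (0:ℝ) 1 := by
    intro k
    have hk : (0:ℝ) ≤ (k:ℝ) := Nat.cast_nonneg k
    constructor
    · positivity
    · rw [div_lt_one (by positivity)]; linarith
  have hδanti : StrictAnti δseq := by
    intro a b hab
    have : ((a:ℝ) + 2) < (b:ℝ) + 2 := by
      have : (a:ℝ) < b := by exact_mod_cast hab
      linarith
    exact one_div_lt_one_div_of_lt (by positivity) this
  have hδ0 : Tendsto δseq atTop (nhds 0) := by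
    apply squeeze_zero (g := fun k : ℕ => 1 / ((k : ℝ) + 1))
    · intro k; positivity
    · intro k
      apply one_div_le_one_div_of_le (by positivity)
      have : (0:ℝ) ≤ (k:ℝ) := Nat.cast_nonneg k
      linarith
    · exact tendsto_one_div_add_atTop_nhds_zero_nat
  -- the compact product space extraction
  set G : ℕ → (ℕ → Icc (-C) C) := fun k i =>
    ⟨u (δseq k) (e i).1 (e i).2 0, by
      have := hbdd (δseq k) (hδmem k) (e i).1 (he i).1 (e i).2 0
      exact abs_le.mp this⟩ with hG_def
  obtain ⟨a, -, φ, hφ, hGφ⟩ := isCompact_univ.tendsto_subseq (x := G) (fun k => mem_univ _)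
  set εm : ℕ → ℝ := δseq ∘ φ with hεm_def
  have hεmem : ∀ m, εm m ∈ Ioo (0:ℝ) 1 := fun m => hδmem (φ m)
  have hεanti : StrictAnti εm := hδanti.comp_strictMono hφ
  have hε0 : Tendsto εm atTop (nhds 0) := hδ0.comp hφ.tendsto_atTop
  -- convergence at the dense sequence
  have hLconv : ∀ i, Tendsto (fun m => u (εm m) (e i).1 (e i).2 0) atTop (nhds (a i : ℝ)) := by
    intro i
    have h1 := tendsto_pi_nhds.mp hGφ i
    exact (continuous_subtype_val.tendsto _).comp h1
  -- modulus for the restricted family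
  set v : ℕ → ℝ × EuclideanSpace ℝ (Fin n) → ℝ := fun m q => u (εm m) q.1 q.2 0 with hv_def
  have hvmod : ∀ m, ∀ q ∈ S, ∀ q' ∈ S,
      |v m q - v m q'| ≤ C * ((1 + ‖q.2‖) * Real.sqrt |q.1 - q'.1| + ‖q.2 - q'.2‖) := by
    intro m q hq q' hq'
    have := hmod (εm m) (hεmem m) q.1 hq.1 q'.1 hq'.1 q.2 0 q'.2 0
    simpa using this
  -- existence of the limit everywhere in S
  have hex : ∀ q ∈ S, ∃ L, Tendsto (fun m => v m q) atTop (nhds L) := by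
    intro q hq
    apply cauchySeq_tendsto_of_complete
    rw [Metric.cauchySeq_iff]
    intro ρ hρ
    obtain ⟨δ, hδpos, hδsm⟩ := aux_small C ‖q.2‖ (ρ/3) hC (norm_nonneg _) (by linarith)
    obtain ⟨i, hi⟩ := hdense q hq δ hδpos
    have hd1 : |q.1 - (e i).1| ≤ dist q (e i) := by
      rw [← Real.dist_eq, Prod.dist_eq]; exact le_max_left _ _
    have hd2 : ‖q.2 - (e i).2‖ ≤ dist q (e i) := by
      rw [← dist_eq_norm, Prod.dist_eq]; exact le_max_right _ _
    have hclose : ∀ m, |v m q - v m (e i)| < ρ/3 := by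
      intro m
      refine (hvmod m q hq (e i) (he i)).trans_lt ?_
      have key := hδsm |q.1 - (e i).1| ‖q.2 - (e i).2‖ (abs_nonneg _)
        (hd1.trans hi.le) (norm_nonneg _) (hd2.trans hi.le)
      have : C * ((1 + ‖q.2‖) * Real.sqrt |q.1 - (e i).1| + ‖q.2 - (e i).2‖) ≤
          C * ((1 + ‖q.2‖) * Real.sqrt |q.1 - (e i).1| + 2 * ‖q.2 - (e i).2‖) := by
        apply mul_le_mul_of_nonneg_left _ hC.le
        have := norm_nonneg (q.2 - (e i).2); linarith
      linarith
    have hcc : CauchySeq (fun m => v m (e i)) := (hLconv i).cauchySeq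
    rw [Metric.cauchySeq_iff] at hcc
    obtain ⟨N, hN⟩ := hcc (ρ/3) (by linarith)
    refine ⟨N, fun m hm k hk => ?_⟩
    have h5 := hN m hm k hk
    rw [Real.dist_eq] at h5 ⊢
    have t1 : |v m q - v k q| ≤ |v m q - v m (e i)| + |v m (e i) - v k q| := abs_sub_le _ _ _
    have t2 : |v m (e i) - v k q| ≤ |v m (e i) - v k (e i)| + |v k (e i) - v k q| := abs_sub_le _ _ _
    have t3 : |v k (e i) - v k q| = |v k q - v k (e i)| := abs_sub_comm _ _
    have := hclose m
    have := hclose k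
    rw [t3] at t2
    linarith
  -- the limit function
  set ustar : ℝ → EuclideanSpace ℝ (Fin n) → ℝ := fun t x => limUnder atTop (fun m => u (εm m) t x 0) with hustar_def
  have hconv : ∀ q ∈ S, Tendsto (fun m => v m q) atTop (nhds (ustar q.1 q.2)) := by
    intro q hq
    exact tendsto_nhds_limUnder (hex q hq)
  -- bound
  have hb : ∀ t ∈ Icc 0 T, ∀ xt, |ustar t xt| ≤ C := by
    intro t ht xt
    have h1 := (hconv (t, xt) ⟨ht, mem_univ _⟩).abs
    exact le_of_tendsto h1 (Eventually.of_forall fun m => hbdd _ (hεmem m) t ht xt 0)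
  -- modulus of the limit
  have hmodstar : ∀ t ∈ Icc 0 T, ∀ s ∈ Icc 0 T, ∀ xt xt',
      |ustar t xt - ustar s xt'| ≤ C * ((1 + ‖xt‖) * Real.sqrt |t - s| + ‖xt - xt'‖) := by
    intro t ht s hs xt xt'
    have h1 := hconv (t, xt) ⟨ht, mem_univ _⟩
    have h2 := hconv (s, xt') ⟨hs, mem_univ _⟩
    exact le_of_tendsto ((h1.sub h2).abs)
      (Eventually.of_forall fun m => hvmod m (t, xt) ⟨ht, mem_univ _⟩ (s, xt') ⟨hs, mem_univ _⟩)
  -- continuity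
  have hcont : ContinuousOn (fun q : ℝ × EuclideanSpace ℝ (Fin n) => ustar q.1 q.2) S := by
    intro q hq
    rw [Metric.continuousWithinAt_iff]
    intro ρ hρ
    obtain ⟨δ, hδpos, hδsm⟩ := aux_small C ‖q.2‖ ρ hC (norm_nonneg _) hρ
    refine ⟨δ, hδpos, fun q' hq' hd => ?_⟩
    have h0 := hmodstar q.1 hq.1 q'.1 hq'.1 q.2 q'.2
    have hd1 : |q.1 - q'.1| ≤ δ := by
      rw [← Real.dist_eq]
      calc dist q.1 q'.1 ≤ dist q q' := by rw [Prod.dist_eq]; exact le_max_left _ _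
        _ = dist q' q := dist_comm _ _
        _ ≤ δ := hd.le
    have hd2 : ‖q.2 - q'.2‖ ≤ δ := by
      rw [← dist_eq_norm]
      calc dist q.2 q'.2 ≤ dist q q' := by rw [Prod.dist_eq]; exact le_max_right _ _
        _ = dist q' q := dist_comm _ _
        _ ≤ δ := hd.le
    have key := hδsm |q.1 - q'.1| ‖q.2 - q'.2‖ (abs_nonneg _) hd1 (norm_nonneg _) hd2
    have hmono : C * ((1 + ‖q.2‖) * Real.sqrt |q.1 - q'.1| + ‖q.2 - q'.2‖) ≤
        C * ((1 + ‖q.2‖) * Real.sqrt |q.1 - q'.1| + 2 * ‖q.2 - q'.2‖) := by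
      apply mul_le_mul_of_nonneg_left _ hC.le
      have := norm_nonneg (q.2 - q'.2); linarith
    rw [Real.dist_eq]
    calc |ustar q'.1 q'.2 - ustar q.1 q.2| = |ustar q.1 q.2 - ustar q'.1 q'.2| := abs_sub_comm _ _
      _ ≤ C * ((1 + ‖q.2‖) * Real.sqrt |q.1 - q'.1| + ‖q.2 - q'.2‖) := h0
      _ < ρ := by linarith
  -- pointwise convergence with arbitrary fast variable
  have hpt : ∀ t ∈ Icc 0 T, ∀ xt xb,
      Tendsto (fun m => u (εm m) t xt xb) atTop (nhds (ustar t xt)) := by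
    intro t ht xt xb
    have h1 := hconv (t, xt) ⟨ht, mem_univ _⟩
    have h2 : Tendsto (fun m => u (εm m) t xt xb - v m (t, xt)) atTop (nhds 0) := by
      apply squeeze_zero_norm (a := fun m => C * (Real.sqrt (εm m) * ‖xb‖))
      · intro m
        have := hmod (εm m) (hεmem m) t ht t ht xt xb xt 0
        simpa [Real.norm_eq_abs] using this
      · have hsq : Tendsto (fun m => Real.sqrt (εm m)) atTop (nhds 0) := by
          have := (Real.continuous_sqrt.tendsto 0).comp hε0
          simpa [Function.comp_def] using this
        have h3 := (hsq.mul_const ‖xb‖).const_mul C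
        simpa using h3
    have h4 := h2.add h1
    simpa using h4
  refine ⟨εm, ustar, hεmem, hεanti, hε0, hb, hcont, hmodstar, hpt, ?_⟩
  -- uniform convergence on compacts
  intro K hK hKS
  rw [Metric.tendstoUniformlyOn_iff]
  intro ρ hρ
  rcases K.eq_empty_or_nonempty with rfl | hKne
  · exact Eventually.of_forall (by simp)
  obtain ⟨R, hR⟩ := hK.isBounded.exists_norm_le
  obtain ⟨q0, hq0⟩ := hKne
  have hR0 : 0 ≤ R := (norm_nonneg q0).trans (hR q0 hq0)
  obtain ⟨δ, hδpos, hδsm⟩ := aux_small C (2*R) (ρ/3) hC (by linarith) (by linarith)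
  obtain ⟨Y, hYK, hYfin, hcover⟩ := hK.totallyBounded.exists_subset (Metric.dist_mem_uniformity hδpos)
  have hconvY : ∀ y ∈ Y, ∀ᶠ m in atTop, |ustar y.1 y.2.1 - u (εm m) y.1 y.2.1 y.2.2| < ρ/3 := by
    intro y hy
    have hyS := hKS (hYK hy)
    have h6 := hpt y.1 hyS.1 y.2.1 y.2.2
    have h5 : Tendsto (fun m => |ustar y.1 y.2.1 - u (εm m) y.1 y.2.1 y.2.2|) atTop (nhds 0) := by
      have := ((tendsto_const_nhds (x := ustar y.1 y.2.1)).sub h6).abs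
      simpa using this
    exact h5.eventually_lt_const (by linarith)
  have hall := (eventually_all_finite hYfin).mpr hconvY
  filter_upwards [hall] with m hmm
  intro q hq
  obtain ⟨y, hy, hqy⟩ : ∃ y ∈ Y, dist q y < δ := by
    have := hcover hq
    simpa using this
  have hqS := hKS hq
  have hyS := hKS (hYK hy)
  have hd0 : (0:ℝ) ≤ dist q y := dist_nonneg
  have h1 : |q.1 - y.1| ≤ dist q y := by
    rw [← Real.dist_eq, Prod.dist_eq]; exact le_max_left _ _
  have h2snd : dist q.2 y.2 ≤ dist q y := by
    rw [Prod.dist_eq]; exact le_max_right _ _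
  have h2 : ‖q.2.1 - y.2.1‖ ≤ dist q y := by
    rw [← dist_eq_norm]
    refine le_trans ?_ h2snd
    rw [Prod.dist_eq]; exact le_max_left _ _
  have h3 : ‖q.2.2 - y.2.2‖ ≤ dist q y := by
    rw [← dist_eq_norm]
    refine le_trans ?_ h2snd
    rw [Prod.dist_eq]; exact le_max_right _ _
  have hn1 : ‖q.2.1‖ ≤ R := ((norm_fst_le q.2).trans (norm_snd_le q)).trans (hR q hq)
  have hn2 : ‖q.2.2‖ ≤ R := ((norm_snd_le q.2).trans (norm_snd_le q)).trans (hR q hq)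
  have hsd : Real.sqrt |q.1 - y.1| ≤ Real.sqrt (dist q y) := Real.sqrt_le_sqrt h1
  have hε1 : Real.sqrt (εm m) ≤ 1 := Real.sqrt_le_one.mpr (hεmem m).2.le
  have key := hδsm (dist q y) (dist q y) hd0 hqy.le hd0 hqy.le
  have hu : |u (εm m) q.1 q.2.1 q.2.2 - u (εm m) y.1 y.2.1 y.2.2| < ρ/3 := by
    have h0 := hmod (εm m) (hεmem m) q.1 hqS.1 y.1 hyS.1 q.2.1 q.2.2 y.2.1 y.2.2
    have b1 : (1 + ‖q.2.1‖ + ‖q.2.2‖) * Real.sqrt |q.1 - y.1| ≤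
        (1 + 2*R) * Real.sqrt (dist q y) := by
      apply mul_le_mul (by linarith) hsd (Real.sqrt_nonneg _) (by linarith)
    have b3 : Real.sqrt (εm m) * ‖q.2.2 - y.2.2‖ ≤ 1 * dist q y :=
      mul_le_mul hε1 h3 (norm_nonneg _) zero_le_one
    have hstep : C * ((1 + ‖q.2.1‖ + ‖q.2.2‖) * Real.sqrt |q.1 - y.1| + ‖q.2.1 - y.2.1‖ +
        Real.sqrt (εm m) * ‖q.2.2 - y.2.2‖) ≤ C * ((1 + 2*R) * Real.sqrt (dist q y) + 2 * dist q y) := by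
      apply mul_le_mul_of_nonneg_left _ hC.le
      linarith
    linarith
  have hus : |ustar q.1 q.2.1 - ustar y.1 y.2.1| < ρ/3 := by
    have h0 := hmodstar q.1 hqS.1 y.1 hyS.1 q.2.1 y.2.1
    have b1 : (1 + ‖q.2.1‖) * Real.sqrt |q.1 - y.1| ≤ (1 + 2*R) * Real.sqrt (dist q y) := by
      apply mul_le_mul (by linarith) hsd (Real.sqrt_nonneg _) (by linarith)
    have hstep : C * ((1 + ‖q.2.1‖) * Real.sqrt |q.1 - y.1| + ‖q.2.1 - y.2.1‖) ≤
        C * ((1 + 2*R) * Real.sqrt (dist q y) + 2 * dist q y) := by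
      apply mul_le_mul_of_nonneg_left _ hC.le
      linarith
    linarith
  have hy3 := hmm y hy
  rw [Real.dist_eq]
  have t1 : |ustar q.1 q.2.1 - u (εm m) q.1 q.2.1 q.2.2| ≤
      |ustar q.1 q.2.1 - ustar y.1 y.2.1| + |ustar y.1 y.2.1 - u (εm m) q.1 q.2.1 q.2.2| :=
    abs_sub_le _ _ _
  have t2 : |ustar y.1 y.2.1 - u (εm m) q.1 q.2.1 q.2.2| ≤
      |ustar y.1 y.2.1 - u (εm m) y.1 y.2.1 y.2.2| +
      |u (εm m) y.1 y.2.1 y.2.2 - u (εm m) q.1 q.2.1 q.2.2| := abs_sub_le _ _ _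
  have t3 : |u (εm m) y.1 y.2.1 y.2.2 - u (εm m) q.1 q.2.1 q.2.2| =
      |u (εm m) q.1 q.2.1 q.2.2 - u (εm m) y.1 y.2.1 y.2.2| := abs_sub_comm _ _
  rw [t3] at t2
  linarith
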